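/- arXiv:1407.2053 — 4 statements merged into one kernel-verified Lean document; each statement's English description precedes it below -/
import Mathlib

section
/- Let G be a split graph with vertex partition into a clique C(G) and a maximal independent set S(G), and let D be a minimal dominating set of G with D_C = D ∩ C(G) and D_S = D ∩ S(G). Then D_S = S(G) \ N_G(D_C). -/
open Set

variable {V : Type*}

/-- The closed neighbourhood `N_G[x]` of a vertex. -/
def closedNbhd (G : SimpleGraph V) (x : V) : Set V := insert x (G.neighborSet x)

/-- The closed neighbourhood `N_G[A]` of a set of vertices. -/
def closedNbhdSet (G : SimpleGraph V) (A : Set V) : Set V := ⋃ x ∈ A, closedNbhd G x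

/-- The open neighbourhood `N_G(A) = N_G[A] \ A` of a set of vertices. -/
def openNbhdSet (G : SimpleGraph V) (A : Set V) : Set V := closedNbhdSet G A \ A

/-- `D` is a dominating set of `G`. -/
def Dominates (G : SimpleGraph V) (D : Set V) : Prop := ∀ v, v ∈ closedNbhdSet G D

/-- `A` is an independent set of `G`. -/
def IsIndep (G : SimpleGraph V) (A : Set V) : Prop := A.Pairwise fun a b => ¬ G.Adj a b

/-- `(C, S)` is a split partition of `G`: `C` a clique, `S` an independent set,
together partitioning the vertex set. -/
def IsSplitPartition (G : SimpleGraph V) (C S : Set V) : Prop :=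
  C ∪ S = univ ∧ C ∩ S = ∅ ∧ G.IsClique C ∧ IsIndep G S

lemma mem_closedNbhdSet {G : SimpleGraph V} {A : Set V} {v : V} :
    v ∈ closedNbhdSet G A ↔ ∃ x ∈ A, v = x ∨ G.Adj x v := by
  simp [closedNbhdSet, closedNbhd, SimpleGraph.mem_neighborSet, eq_comm]

/-- In a split graph, a minimal dominating set `D` satisfies `D ∩ S = S \ N_G(D ∩ C)`. -/
theorem stmt_9 [Fintype V] (G : SimpleGraph V) (C S : Set V)
    (hCS : IsSplitPartition G C S) (hSmax : Maximal (IsIndep G) S)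
    (D : Set V) (hD : Minimal (Dominates G) D) :
    D ∩ S = S \ openNbhdSet G (D ∩ C) := by
  obtain ⟨hunion, hdisj, hclique, hindep⟩ := hCS
  obtain ⟨hDdom, hDmin⟩ := hD
  have hCSdisj : ∀ x, x ∈ C → x ∈ S → False := by
    intro x hC hS
    have : x ∈ C ∩ S := ⟨hC, hS⟩
    simp [hdisj] at this
  ext v
  simp only [mem_inter_iff, mem_diff]
  constructor
  · rintro ⟨hvD, hvS⟩
    refine ⟨hvS, fun hv => ?_⟩
    obtain ⟨hvN, _⟩ := hv
    obtain ⟨x, ⟨hxD, hxC⟩, hx⟩ := mem_closedNbhdSet.mp hvN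
    have hxv : x ≠ v := fun h => hCSdisj x hxC (h ▸ hvS)
    have hadj : G.Adj x v := hx.resolve_left (fun h => hxv h.symm)
    have hdom : Dominates G (D \ {v}) := by
      intro u
      obtain ⟨d, hdD, hd⟩ := mem_closedNbhdSet.mp (hDdom u)
      by_cases hdv : d = v
      · rw [hdv] at hd
        rcases hd with huv | hd
        · rw [huv]
          exact mem_closedNbhdSet.mpr ⟨x, ⟨hxD, fun h => hxv (mem_singleton_iff.mp h)⟩,
            Or.inr hadj⟩
        · -- u adjacent to v ∈ S, so u ∈ C
          have huv : u ≠ v := fun h => G.irrefl (h ▸ hd)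
          have huC : u ∈ C := by
            rcases (eq_univ_iff_forall.mp hunion u) with h | h
            · exact h
            · exact absurd hd (hindep hvS h huv.symm)
          by_cases hux : u = x
          · exact mem_closedNbhdSet.mpr ⟨x, ⟨hxD, fun h => hxv (mem_singleton_iff.mp h)⟩,
              Or.inl hux⟩
          · exact mem_closedNbhdSet.mpr ⟨x, ⟨hxD, fun h => hxv (mem_singleton_iff.mp h)⟩,
              Or.inr (hclique hxC huC (fun h => hux h.symm))⟩
      · exact mem_closedNbhdSet.mpr ⟨d, ⟨hdD, fun h => hdv (mem_singleton_iff.mp h)⟩, hd⟩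
    have := hDmin hdom diff_subset
    exact (this hvD).2 rfl
  · rintro ⟨hvS, hvN⟩
    refine ⟨?_, hvS⟩
    obtain ⟨d, hdD, hd⟩ := mem_closedNbhdSet.mp (hDdom v)
    rcases hd with rfl | hadj
    · exact hdD
    · exfalso
      have hdv : d ≠ v := G.ne_of_adj hadj
      have hdC : d ∈ C := by
        rcases (eq_univ_iff_forall.mp hunion d) with h | h
        · exact h
        · exact absurd hadj (hindep h hvS hdv)
      apply hvN
      refine ⟨mem_closedNbhdSet.mpr ⟨d, ⟨hdD, hdC⟩, Or.inr hadj⟩, fun h => ?_⟩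
      exact hCSdisj v h.2 hvS
end

section
/- Let G be a split graph with clique C(G) and maximal independent set S(G), and let A ⊆ C(G) be such that every vertex of A has a private neighbour with respect to the set A ∪ (S(G) \ N_G(A)). Then A ∪ (S(G) \ N_G(A)) is a minimal dominating set of G. -/
open Set

variable {V : Type*}

lemma mem_closedNbhd_iff {G : SimpleGraph V} {y v : V} :
    v ∈ closedNbhd G y ↔ v = y ∨ G.Adj y v := by
  simp [closedNbhd, SimpleGraph.mem_neighborSet]

lemma mem_closedNbhdSet_iff {G : SimpleGraph V} {D : Set V} {v : V} :
    v ∈ closedNbhdSet G D ↔ ∃ y ∈ D, v = y ∨ G.Adj y v := by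
  simp [closedNbhdSet, mem_closedNbhd_iff]

/-- In a split graph, if `A ⊆ C` and every vertex of `A` has a private neighbour with
respect to `A ∪ (S \ N_G(A))`, then `A ∪ (S \ N_G(A))` is a minimal dominating set. -/
theorem stmt_10 [Fintype V] (G : SimpleGraph V) (C S : Set V)
    (hCS : IsSplitPartition G C S) (hSmax : Maximal (IsIndep G) S)
    (A : Set V) (hA : A ⊆ C)
    (hpriv : ∀ x ∈ A,
      (closedNbhd G x \
        closedNbhdSet G ((A ∪ (S \ openNbhdSet G A)) \ {x})).Nonempty) :
    Minimal (Dominates G) (A ∪ (S \ openNbhdSet G A)) := by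
  obtain ⟨hu, hi, hclique, hindep⟩ := hCS
  set D := A ∪ (S \ openNbhdSet G A) with hD
  have hCSdisj : ∀ v, v ∈ C → v ∈ S → False := fun v hv hs => by
    have : v ∈ C ∩ S := ⟨hv, hs⟩
    rw [hi] at this; exact this
  constructor
  · -- D dominates
    intro v
    rw [mem_closedNbhdSet_iff]
    have hv : v ∈ C ∪ S := by rw [hu]; trivial
    rcases hv with hvC | hvS
    · by_cases hvA : v ∈ A
      · exact ⟨v, Or.inl hvA, Or.inl rfl⟩
      · rcases A.eq_empty_or_nonempty with hAe | ⟨a, haA⟩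
        · -- A empty: D = S, use maximality of S
          by_cases hvS : v ∈ S
          · exact absurd hvS (hCSdisj v hvC)
          · -- v has a neighbour in S
            by_contra hno
            push_neg at hno
            have hins : IsIndep G (insert v S) := by
              intro x hx y hy hxy
              rcases hx with rfl | hx
              · rcases hy with rfl | hy
                · exact absurd rfl hxy
                · intro hadj
                  have hyD : y ∈ D := Or.inr ⟨hy, by
                    simp [openNbhdSet, closedNbhdSet, hAe]⟩
                  exact (hno y hyD).2 hadj.symm
              · rcases hy with rfl | hy
                · intro hadj
                  have hxD : x ∈ D := Or.inr ⟨hx, by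
                    simp [openNbhdSet, closedNbhdSet, hAe]⟩
                  exact (hno x hxD).2 hadj
                · exact hindep hx hy hxy
            have := hSmax.2 hins (subset_insert v S) (mem_insert v S)
            exact hvS this
        · -- A nonempty: v adjacent to a via clique
          have hvne : v ≠ a := fun h => hvA (h ▸ haA)
          exact ⟨a, Or.inl haA, Or.inr (hclique (hA haA) hvC hvne.symm)⟩
    · by_cases hvN : v ∈ openNbhdSet G A
      · obtain ⟨hvc, -⟩ := hvN
        rw [mem_closedNbhdSet_iff] at hvc
        obtain ⟨a, haA, h⟩ := hvc
        exact ⟨a, Or.inl haA, h⟩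
      · exact ⟨v, Or.inr ⟨hvS, hvN⟩, Or.inl rfl⟩
  · -- minimality
    intro D' hD' hsub x hx
    by_contra hxD'
    rcases hx with hxA | ⟨hxS, hxN⟩
    · obtain ⟨w, hw1, hw2⟩ := hpriv x hxA
      obtain ⟨y, hyD', hy⟩ := mem_closedNbhdSet_iff.mp (hD' w)
      have hyne : y ≠ x := fun h => hxD' (h ▸ hyD')
      exact hw2 (mem_closedNbhdSet_iff.mpr
        ⟨y, ⟨hsub hyD', fun h => hyne (by simpa using h)⟩, hy⟩)
    · obtain ⟨y, hyD', hy⟩ := mem_closedNbhdSet_iff.mp (hD' x)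
      have hyx : y = x := by
        by_contra hne
        have hadj : G.Adj y x := by
          rcases hy with rfl | h
          · exact absurd rfl hne
          · exact h
        rcases hsub hyD' with hyA | ⟨hyS, -⟩
        · apply hxN
          refine ⟨mem_closedNbhdSet_iff.mpr ⟨y, hyA, Or.inr hadj⟩, ?_⟩
          intro hxA
          exact hCSdisj x (hA hxA) hxS
        · exact hindep hyS hxS (fun h => hne (h ▸ rfl)) hadj
      exact hxD' (hyx ▸ hyD')
end

section
/- Let G be a split graph with clique C(G) and maximal independent set S(G), and let D be a minimal dominating set of G. Then for every subset A ⊆ D ∩ C(G), the set A ∪ (S(G) \ N_G(A)) is a minimal dominating set of G. -/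
open Set

variable {V : Type*}

lemma mem_cns {G : SimpleGraph V} {B : Set V} {v : V} :
    v ∈ closedNbhdSet G B ↔ ∃ b ∈ B, v = b ∨ G.Adj b v := by
  simp [closedNbhdSet, closedNbhd, SimpleGraph.mem_neighborSet, eq_comm]

/-- In a split graph, if `D` is a minimal dominating set, then for every `A ⊆ D ∩ C`,
the set `A ∪ (S \ N_G(A))` is a minimal dominating set. -/
theorem stmt_11 [Fintype V] (G : SimpleGraph V) (C S : Set V)
    (hCS : IsSplitPartition G C S) (hSmax : Maximal (IsIndep G) S)
    (D : Set V) (hD : Minimal (Dominates G) D) (A : Set V) (hA : A ⊆ D ∩ C) :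
    Minimal (Dominates G) (A ∪ (S \ openNbhdSet G A)) := by
  obtain ⟨hUniv, hDisj, hClique, hIndep⟩ := hCS
  have hAD : A ⊆ D := fun x hx => (hA hx).1
  have hAC : A ⊆ C := fun x hx => (hA hx).2
  have hns : ∀ x, x ∈ C → x ∉ S := by
    intro x hc hs
    have : x ∈ C ∩ S := ⟨hc, hs⟩
    rw [hDisj] at this
    exact this
  have hcs : ∀ x : V, x ∈ C ∨ x ∈ S := by
    intro x
    have : x ∈ C ∪ S := by rw [hUniv]; trivial
    exact this
  -- every vertex in C has a neighbor in S
  have hCnbr : ∀ v ∈ C, ∃ s ∈ S, G.Adj v s := by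
    intro v hv
    by_contra hno
    push_neg at hno
    have hvS : v ∉ S := hns v hv
    have hind : IsIndep G (insert v S) := by
      intro x hx y hy hxy
      rcases hx with rfl | hx
      · rcases hy with rfl | hy
        · exact absurd rfl hxy
        · exact hno y hy
      · rcases hy with rfl | hy
        · exact fun h => hno x hx h.symm
        · exact hIndep hx hy hxy
    have := hSmax.2 hind (subset_insert v S) (mem_insert v S)
    exact hvS this
  -- if s ∈ S is in closedNbhdSet of A, then s ∈ openNbhdSet of A
  have hSopen : ∀ s ∈ S, s ∈ closedNbhdSet G A → s ∈ openNbhdSet G A := by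
    intro s hs h
    exact ⟨h, fun hsA => hns s (hAC hsA) hs⟩
  constructor
  · -- domination
    intro v
    rcases hcs v with hv | hv
    · -- v ∈ C
      obtain ⟨s, hsS, hadj⟩ := hCnbr v hv
      by_cases hsN : s ∈ openNbhdSet G A
      · obtain ⟨a, haA, hsa⟩ := mem_cns.mp hsN.1
        rcases hsa with rfl | hsa
        · exact absurd (hns s (hAC haA) hsS) (fun h => h)
        · -- a ∈ A ⊆ C, v ∈ C
          by_cases hva : v = a
          · exact mem_cns.mpr ⟨a, Or.inl haA, Or.inl hva⟩
          · exact mem_cns.mpr ⟨a, Or.inl haA, Or.inr (hClique (hAC haA) hv (fun h => hva h.symm))⟩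
      · exact mem_cns.mpr ⟨s, Or.inr ⟨hsS, hsN⟩, Or.inr hadj.symm⟩
    · -- v ∈ S
      by_cases hvN : v ∈ openNbhdSet G A
      · obtain ⟨a, haA, hva⟩ := mem_cns.mp hvN.1
        exact mem_cns.mpr ⟨a, Or.inl haA, hva⟩
      · exact mem_cns.mpr ⟨v, Or.inr ⟨hv, hvN⟩, Or.inl rfl⟩
  · -- minimality
    intro E hE hET
    intro w hw
    rcases hw with hwA | ⟨hwS, hwN⟩
    · -- w ∈ A : use private neighbor
      by_contra hwE
      -- who dominates w in E?
      obtain ⟨e, heE, hwe⟩ := mem_cns.mp (hE w)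
      have heT := hET heE
      have hew : e ≠ w := fun h => hwE (h ▸ heE)
      have heA : e ∈ A := by
        rcases heT with h | ⟨heS, heN⟩
        · exact h
        · exfalso
          rcases hwe with rfl | hadj
          · exact hwE heE
          · exact heN (hSopen e heS (mem_cns.mpr ⟨w, hwA, Or.inr hadj.symm⟩))
      -- private neighbor of w w.r.t. D
      have hwD : w ∈ D := hAD hwA
      have hnot : ¬ Dominates G (D \ {w}) := by
        intro hdom
        have := hD.2 hdom diff_subset hwD
        exact this.2 rfl
      have : ∃ p, p ∉ closedNbhdSet G (D \ {w}) := by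
        by_contra h
        push_neg at h
        exact hnot h
      obtain ⟨p, hp⟩ := this
      have hpw : p = w ∨ G.Adj w p := by
        obtain ⟨d, hdD, hpd⟩ := mem_cns.mp (hD.1 p)
        by_cases hdw : d = w
        · exact hdw ▸ hpd
        · exact absurd (mem_cns.mpr ⟨d, show d ∈ D \ {w} from ⟨hdD, hdw⟩, hpd⟩) hp
      -- e ∈ D \ {w}, so p ∉ N[e]
      have heD : e ∈ (D \ {w} : Set V) := ⟨hAD heA, hew⟩
      have hpe : ¬ (p = e ∨ G.Adj e p) := fun h => hp (mem_cns.mpr ⟨e, heD, h⟩)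
      -- p = w impossible
      have hpw' : G.Adj w p := by
        rcases hpw with rfl | h
        · rcases hwe with rfl | hadj
          · exact absurd rfl hew
          · exact absurd (mem_cns.mpr ⟨e, heD, Or.inr hadj⟩) hp
        · exact h
      -- p ∈ S
      have hpS : p ∈ S := by
        rcases hcs p with hpC | hpS
        · exfalso
          by_cases hpee : p = e
          · exact hpe (Or.inl hpee)
          · exact hpe (Or.inr (hClique (hAC heA) hpC (Ne.symm hpee)))
        · exact hpS
      -- p ∈ N(A)
      have hpN : p ∈ openNbhdSet G A :=
        hSopen p hpS (mem_cns.mpr ⟨w, hwA, Or.inr hpw'⟩)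
      -- who dominates p in E?
      obtain ⟨f, hfE, hpf⟩ := mem_cns.mp (hE p)
      rcases hET hfE with hfA | ⟨hfS, hfN⟩
      · -- f ∈ A : then f = w (else f ∈ D\{w} dominates p), contra w ∉ E
        by_cases hfw : f = w
        · exact hwE (hfw ▸ hfE)
        · exact hp (mem_cns.mpr ⟨f, show f ∈ D \ {w} from ⟨hAD hfA, hfw⟩, hpf⟩)
      · -- f ∈ S \ N(A)
        rcases hpf with rfl | hadj
        · exact hfN hpN
        · exact hIndep hfS hpS (fun h => G.irrefl (h ▸ hadj)) hadj
    · -- w ∈ S \ N(A)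
      by_contra hwE
      obtain ⟨f, hfE, hwf⟩ := mem_cns.mp (hE w)
      have hfw : f ≠ w := fun h => hwE (h ▸ hfE)
      rcases hwf with rfl | hadj
      · exact hwE hfE
      · rcases hET hfE with hfA | ⟨hfS, _⟩
        · exact hwN (hSopen w hwS (mem_cns.mpr ⟨f, hfA, Or.inr hadj⟩))
        · exact hIndep hfS hwS hfw hadj
end

section
/- For every graph G, the minimal dominating sets of G coincide with the minimal dominating sets of its completion graph G_co. -/
open Set

variable {V : Type*}

/-- `IR` is a valid set of irredundant vertices of `G`: every member has an
inclusion-minimal closed neighbourhood, exactly one representative is kept per class of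
vertices with equal closed neighbourhoods, and every vertex with a minimal closed
neighbourhood has a representative in `IR`. The remaining (redundant) vertices form
`IRᶜ = RN(G)`. -/
def IsIrrSet (G : SimpleGraph V) (IR : Set V) : Prop :=
  (∀ x ∈ IR, ∀ y : V, closedNbhd G y ⊆ closedNbhd G x → closedNbhd G y = closedNbhd G x) ∧
  (∀ x ∈ IR, ∀ y ∈ IR, closedNbhd G x = closedNbhd G y → x = y) ∧
  (∀ x : V, (∀ y : V, closedNbhd G y ⊆ closedNbhd G x → closedNbhd G y = closedNbhd G x) →
    ∃ z ∈ IR, closedNbhd G z = closedNbhd G x)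

/-- The completion `G_co` of `G` (w.r.t. the irredundant set `IR`): all edges between
distinct redundant vertices are added. -/
def completion (G : SimpleGraph V) (IR : Set V) : SimpleGraph V where
  Adj x y := G.Adj x y ∨ (x ≠ y ∧ x ∉ IR ∧ y ∉ IR)
  symm := by
    constructor
    intro x y h
    rcases h with h | ⟨hne, hx, hy⟩
    · exact Or.inl h.symm
    · exact Or.inr ⟨hne.symm, hy, hx⟩
  loopless := by
    constructor
    intro x h
    rcases h with h | ⟨hne, _, _⟩
    · exact G.irrefl h
    · exact hne rfl

lemma mem_closedNbhd_comm {G : SimpleGraph V} {a b : V} :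
    a ∈ closedNbhd G b ↔ b ∈ closedNbhd G a := by
  simp only [closedNbhd, Set.mem_insert_iff, SimpleGraph.mem_neighborSet]
  constructor <;> rintro (h | h)
  · exact Or.inl h.symm
  · exact Or.inr h.symm
  · exact Or.inl h.symm
  · exact Or.inr h.symm

lemma exists_irr_subset [Fintype V] (G : SimpleGraph V) (IR : Set V)
    (hIR : IsIrrSet G IR) (x : V) : ∃ z ∈ IR, closedNbhd G z ⊆ closedNbhd G x := by
  suffices h : ∀ n x, (closedNbhd G x).ncard = n →
      ∃ z ∈ IR, closedNbhd G z ⊆ closedNbhd G x from h _ x rfl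
  intro n
  induction n using Nat.strong_induction_on with
  | _ n ih =>
    intro x hn
    by_cases hmin : ∀ y, closedNbhd G y ⊆ closedNbhd G x → closedNbhd G y = closedNbhd G x
    · obtain ⟨z, hz, he⟩ := hIR.2.2 x hmin
      exact ⟨z, hz, he.le⟩
    · push_neg at hmin
      obtain ⟨y, hsub, hne⟩ := hmin
      have hlt : (closedNbhd G y).ncard < n := by
        subst hn
        exact Set.ncard_lt_ncard (ssubset_of_subset_of_ne hsub hne) (Set.toFinite _)
      obtain ⟨z, hz, hs⟩ := ih _ hlt y rfl
      exact ⟨z, hz, hs.trans hsub⟩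

lemma dominates_iff [Fintype V] (G : SimpleGraph V) (IR : Set V)
    (hIR : IsIrrSet G IR) (D : Set V) :
    Dominates G D ↔ Dominates (completion G IR) D := by
  constructor
  · intro hD v
    obtain ⟨d, hd, hv⟩ := by simpa [closedNbhdSet] using hD v
    have hv' : v = d ∨ G.Adj d v := by simpa [closedNbhd] using hv
    have : v ∈ closedNbhd (completion G IR) d := by
      rcases hv' with h | h
      · exact h ▸ Set.mem_insert _ _
      · exact Set.mem_insert_of_mem _ (Or.inl h)
    simpa [closedNbhdSet] using ⟨d, hd, this⟩
  · intro hD v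
    obtain ⟨z, hzIR, hzsub⟩ := exists_irr_subset G IR hIR v
    obtain ⟨d, hd, hz⟩ := by simpa [closedNbhdSet] using hD z
    have hzGd : z ∈ closedNbhd G d := by
      rcases hz with h | h
      · exact h ▸ Set.mem_insert _ _
      · rcases h with h | ⟨_, _, hzn⟩
        · exact Set.mem_insert_of_mem _ h
        · exact absurd hzIR hzn
    have : d ∈ closedNbhd G v := hzsub (mem_closedNbhd_comm.mp hzGd)
    have hvd : v ∈ closedNbhd G d := mem_closedNbhd_comm.mp this
    simpa [closedNbhdSet, closedNbhd] using ⟨d, hd, by simpa [closedNbhd] using hvd⟩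

/-- The minimal dominating sets of `G` coincide with those of its completion `G_co`. -/
theorem stmt_12 [Fintype V] (G : SimpleGraph V) (IR : Set V) (hIR : IsIrrSet G IR) :
    {D : Set V | Minimal (Dominates G) D} =
      {D : Set V | Minimal (Dominates (completion G IR)) D} := by
  have h : Dominates G = Dominates (completion G IR) :=
    funext fun D => propext (dominates_iff G IR hIR D)
  rw [h]
end
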